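/- Assume c ≠ 0, let ω > 0 satisfy h(ω²) = 0, and let j ∈ ℕ. Define τ^{(j)}(ω) = (arccos b*(ω) + 2jπ)/(2ω) if a*(ω) ≥ 0, and τ^{(j)}(ω) = (2π − arccos b*(ω) + 2jπ)/(2ω) if a*(ω) < 0. Then, with delay τ = τ^{(j)}(ω), both iω and −iω are roots of the characteristic function: P(iω) = P(−iω) = 0. -/

import Mathlib

noncomputable section

/-- Coefficient A = b₁+b₂−2a -/
def cA (a b₁ b₂ : ℝ) : ℝ := b₁ + b₂ - 2*a
/-- Coefficient B = b₁b₂−2a(b₁+b₂)+a²+2 -/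
def cB (a b₁ b₂ : ℝ) : ℝ := b₁*b₂ - 2*a*(b₁+b₂) + a^2 + 2
/-- Coefficient C = (a²+1)(b₁+b₂)−2ab₁b₂−2a -/
def cC (a b₁ b₂ : ℝ) : ℝ := (a^2+1)*(b₁+b₂) - 2*a*b₁*b₂ - 2*a
/-- Coefficient D = a²b₁b₂−a(b₁+b₂)+1 -/
def cD (a b₁ b₂ : ℝ) : ℝ := a^2*b₁*b₂ - a*(b₁+b₂) + 1
/-- Coefficient E = c² -/
def cE (c : ℝ) : ℝ := c^2
/-- P̂ = A²−2B -/
def qP (a b₁ b₂ c : ℝ) : ℝ := (cA a b₁ b₂)^2 - 2*(cB a b₁ b₂)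
/-- Q̂ = B²+2D−2AC−E² -/
def qQ (a b₁ b₂ c : ℝ) : ℝ :=
  (cB a b₁ b₂)^2 + 2*(cD a b₁ b₂) - 2*(cA a b₁ b₂)*(cC a b₁ b₂) - (cE c)^2
/-- R̂ = C²−2BD−E²(b₁²+b₂²) -/
def qR (a b₁ b₂ c : ℝ) : ℝ :=
  (cC a b₁ b₂)^2 - 2*(cB a b₁ b₂)*(cD a b₁ b₂) - (cE c)^2*(b₁^2+b₂^2)
/-- Ŝ = D²−E²(b₁b₂)² -/
def qS (a b₁ b₂ c : ℝ) : ℝ := (cD a b₁ b₂)^2 - (cE c)^2*(b₁*b₂)^2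
/-- Auxiliary quartic h(z) = z⁴+P̂z³+Q̂z²+R̂z+Ŝ -/
def hq (a b₁ b₂ c z : ℝ) : ℝ :=
  z^4 + qP a b₁ b₂ c * z^3 + qQ a b₁ b₂ c * z^2 + qR a b₁ b₂ c * z + qS a b₁ b₂ c
/-- Derivative h′(z) = 4z³+3P̂z²+2Q̂z+R̂ -/
def hq' (a b₁ b₂ c z : ℝ) : ℝ :=
  4*z^3 + 3*qP a b₁ b₂ c * z^2 + 2*qQ a b₁ b₂ c * z + qR a b₁ b₂ c
/-- Characteristic function P(λ) = λ⁴+Aλ³+Bλ²+Cλ+D − E(λ+b₁)(λ+b₂)e^{−2λτ} -/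
def charP (a b₁ b₂ c τ : ℝ) (z : ℂ) : ℂ :=
  z^4 + (cA a b₁ b₂ : ℂ)*z^3 + (cB a b₁ b₂ : ℂ)*z^2 + (cC a b₁ b₂ : ℂ)*z + (cD a b₁ b₂ : ℂ)
    - (cE c : ℂ) * (z + (b₁:ℂ)) * (z + (b₂:ℂ)) * Complex.exp (-(2*z*(τ:ℂ)))
/-- Denominator N(ω) = E[(b₁+b₂)²ω² + (ω²−b₁b₂)²] -/
def Nden (a b₁ b₂ c ω : ℝ) : ℝ := cE c * ((b₁+b₂)^2*ω^2 + (ω^2 - b₁*b₂)^2)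
/-- a*(ω) -/
def astar (a b₁ b₂ c ω : ℝ) : ℝ :=
  ((ω^4 - cB a b₁ b₂ * ω^2 + cD a b₁ b₂)*(b₁+b₂)*ω
    + (cA a b₁ b₂ * ω^3 - cC a b₁ b₂ * ω)*(b₁*b₂ - ω^2)) / Nden a b₁ b₂ c ω
/-- b*(ω) -/
def bstar (a b₁ b₂ c ω : ℝ) : ℝ :=
  ((ω^4 - cB a b₁ b₂ * ω^2 + cD a b₁ b₂)*(b₁*b₂ - ω^2)
    + (-(cA a b₁ b₂) * ω^3 + cC a b₁ b₂ * ω)*(b₁+b₂)*ω) / Nden a b₁ b₂ c ω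
/-- The critical delays τ^{(j)}(ω). -/
def tauJ (a b₁ b₂ c ω : ℝ) (j : ℕ) : ℝ :=
  if 0 ≤ astar a b₁ b₂ c ω then
    (Real.arccos (bstar a b₁ b₂ c ω) + 2*j*Real.pi) / (2*ω)
  else
    (2*Real.pi - Real.arccos (bstar a b₁ b₂ c ω) + 2*j*Real.pi) / (2*ω)

set_option maxHeartbeats 1000000 in
theorem Nden_pos' (a b₁ b₂ c : ℝ) (hc : c ≠ 0) (hb₁ : 0 < b₁) (hb₂ : 0 < b₂) (ω : ℝ) (hω : 0 < ω) :
    0 < Nden a b₁ b₂ c ω := by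
  have h1 : 0 < cE c := by simp only [cE]; positivity
  have hb : 0 < b₁ + b₂ := by linarith
  have h2 : 0 < (b₁+b₂)^2*ω^2 + (ω^2 - b₁*b₂)^2 := by
    nlinarith [sq_nonneg (ω^2 - b₁*b₂), mul_pos (pow_pos hb 2) (pow_pos hω 2)]
  exact mul_pos h1 h2

set_option maxHeartbeats 1000000 in
theorem pyth' (a b₁ b₂ c : ℝ) (hc : c ≠ 0) (hb₁ : 0 < b₁) (hb₂ : 0 < b₂) (ω : ℝ) (hω : 0 < ω)
    (hroot : hq a b₁ b₂ c (ω^2) = 0) :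
    astar a b₁ b₂ c ω ^ 2 + bstar a b₁ b₂ c ω ^ 2 = 1 := by
  have hN := Nden_pos' a b₁ b₂ c hc hb₁ hb₂ ω hω
  have hN' : Nden a b₁ b₂ c ω ≠ 0 := ne_of_gt hN
  have key : ((ω^4 - cB a b₁ b₂ * ω^2 + cD a b₁ b₂)*(b₁+b₂)*ω
      + (cA a b₁ b₂ * ω^3 - cC a b₁ b₂ * ω)*(b₁*b₂ - ω^2))^2
      + ((ω^4 - cB a b₁ b₂ * ω^2 + cD a b₁ b₂)*(b₁*b₂ - ω^2)
      + (-(cA a b₁ b₂) * ω^3 + cC a b₁ b₂ * ω)*(b₁+b₂)*ω)^2 = (Nden a b₁ b₂ c ω)^2 := by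
    simp only [hq, qP, qQ, qR, qS, cA, cB, cC, cD, cE, Nden] at hroot ⊢
    linear_combination ((b₁+b₂)^2*ω^2 + (ω^2 - b₁*b₂)^2) * hroot
  simp only [astar, bstar, div_pow]
  rw [← add_div, key, div_self (pow_ne_zero 2 hN')]

set_option maxHeartbeats 1000000 in
theorem trig' (a b₁ b₂ c : ℝ) (hc : c ≠ 0) (hb₁ : 0 < b₁) (hb₂ : 0 < b₂) (ω : ℝ) (hω : 0 < ω)
    (hroot : hq a b₁ b₂ c (ω^2) = 0) (j : ℕ) :
    Real.cos (2*ω*tauJ a b₁ b₂ c ω j) = bstar a b₁ b₂ c ω ∧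
      Real.sin (2*ω*tauJ a b₁ b₂ c ω j) = astar a b₁ b₂ c ω := by
  have hsum := pyth' a b₁ b₂ c hc hb₁ hb₂ ω hω hroot
  set as := astar a b₁ b₂ c ω with has
  set bs := bstar a b₁ b₂ c ω with hbs
  have hb1 : -1 ≤ bs := by nlinarith
  have hb2 : bs ≤ 1 := by nlinarith
  have hsq : Real.sqrt (1 - bs^2) = |as| := by
    rw [show 1 - bs^2 = as^2 by linarith, Real.sqrt_sq_eq_abs]
  have hω' : (2*ω) ≠ 0 := by positivity
  unfold tauJ
  rw [← has, ← hbs]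
  split_ifs with hcase
  · have hθ : 2*ω*((Real.arccos bs + 2*j*Real.pi)/(2*ω))
        = Real.arccos bs + (j:ℤ)*(2*Real.pi) := by
      field_simp; push_cast; ring
    rw [hθ, Real.cos_add_int_mul_two_pi, Real.sin_add_int_mul_two_pi,
        Real.cos_arccos hb1 hb2, Real.sin_arccos, hsq, abs_of_nonneg hcase]
    exact ⟨rfl, rfl⟩
  · have hθ : 2*ω*((2*Real.pi - Real.arccos bs + 2*j*Real.pi)/(2*ω))
        = (2*Real.pi - Real.arccos bs) + (j:ℤ)*(2*Real.pi) := by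
      field_simp; push_cast; ring
    rw [hθ, Real.cos_add_int_mul_two_pi, Real.sin_add_int_mul_two_pi,
        Real.cos_two_pi_sub, Real.sin_two_pi_sub, Real.cos_arccos hb1 hb2, Real.sin_arccos, hsq,
        abs_of_neg (lt_of_not_ge hcase)]
    exact ⟨rfl, by ring⟩

set_option maxHeartbeats 1000000 in
theorem reim' (a b₁ b₂ c : ℝ) (hc : c ≠ 0) (hb₁ : 0 < b₁) (hb₂ : 0 < b₂) (ω : ℝ) (hω : 0 < ω) :
    ω^4 - cB a b₁ b₂ * ω^2 + cD a b₁ b₂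
      = cE c * ((b₁*b₂-ω^2)*bstar a b₁ b₂ c ω + ω*(b₁+b₂)*astar a b₁ b₂ c ω) ∧
    -(cA a b₁ b₂)*ω^3 + cC a b₁ b₂*ω
      = cE c * (ω*(b₁+b₂)*bstar a b₁ b₂ c ω - (b₁*b₂-ω^2)*astar a b₁ b₂ c ω) := by
  have hN' : Nden a b₁ b₂ c ω ≠ 0 := ne_of_gt (Nden_pos' a b₁ b₂ c hc hb₁ hb₂ ω hω)
  constructor <;>
  · simp only [astar, bstar]
    field_simp
    simp only [Nden, cE]
    ring

set_option maxHeartbeats 1000000 in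

theorem stmt_6 (a b₁ b₂ c : ℝ) (ha : 0 < a) (hb₁ : 0 < b₁) (hb₂ : 0 < b₂)
    (hc : c ≠ 0) (ω : ℝ) (hω : 0 < ω)
    (hroot : hq a b₁ b₂ c (ω^2) = 0) (j : ℕ) :
    charP a b₁ b₂ c (tauJ a b₁ b₂ c ω j) (Complex.I * (ω:ℂ)) = 0 ∧
      charP a b₁ b₂ c (tauJ a b₁ b₂ c ω j) (-(Complex.I * (ω:ℂ))) = 0 := by
  obtain ⟨hcos, hsin⟩ := trig' a b₁ b₂ c hc hb₁ hb₂ ω hω hroot j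
  obtain ⟨h1, h2⟩ := reim' a b₁ b₂ c hc hb₁ hb₂ ω hω
  have h1c := congrArg (Complex.ofReal) h1
  have h2c := congrArg (Complex.ofReal) h2
  push_cast at h1c h2c
  set τ := tauJ a b₁ b₂ c ω j with hτ
  set as := astar a b₁ b₂ c ω
  set bs := bstar a b₁ b₂ c ω
  constructor
  · unfold charP
    have hexp : -(2*(Complex.I*(ω:ℂ))*((τ:ℝ):ℂ)) = ((-(2*ω*τ) : ℝ) : ℂ) * Complex.I := by
      push_cast; ring
    rw [hexp, Complex.exp_mul_I, ← Complex.ofReal_cos, ← Complex.ofReal_sin,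
        Real.cos_neg, Real.sin_neg, hcos, hsin]
    linear_combination (norm := (push_cast; ring1)) h1c + Complex.I*h2c
      + ((ω:ℂ)^4*Complex.I^2
        + ((cA a b₁ b₂:ℂ)*(ω:ℂ)^3 + (cE c:ℂ)*(as:ℂ)*(ω:ℂ)^2)*Complex.I
        + ((cB a b₁ b₂:ℂ)*(ω:ℂ)^2 - (cE c:ℂ)*(bs:ℂ)*(ω:ℂ)^2
          + (cE c:ℂ)*(as:ℂ)*((b₁:ℂ)+(b₂:ℂ))*(ω:ℂ) - (ω:ℂ)^4)) * Complex.I_sq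
  · unfold charP
    have hexp : -(2*(-(Complex.I*(ω:ℂ)))*((τ:ℝ):ℂ)) = (((2*ω*τ) : ℝ) : ℂ) * Complex.I := by
      push_cast; ring
    rw [hexp, Complex.exp_mul_I, ← Complex.ofReal_cos, ← Complex.ofReal_sin, hcos, hsin]
    linear_combination (norm := (push_cast; ring1)) h1c - Complex.I*h2c
      + ((ω:ℂ)^4*Complex.I^2
        - ((cA a b₁ b₂:ℂ)*(ω:ℂ)^3 + (cE c:ℂ)*(as:ℂ)*(ω:ℂ)^2)*Complex.I
        + ((cB a b₁ b₂:ℂ)*(ω:ℂ)^2 - (cE c:ℂ)*(bs:ℂ)*(ω:ℂ)^2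
          + (cE c:ℂ)*(as:ℂ)*((b₁:ℂ)+(b₂:ℂ))*(ω:ℂ) - (ω:ℂ)^4)) * Complex.I_sq
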